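/- Let ω be a modulus of continuity, R > 0, ε > 0. Define φ(t) = ω(R+ε) − ω(t) for 0 ≤ t ≤ R+ε, φ(t) = φ(2(R+ε) − t) for R+ε < t ≤ R+3ε, and φ(t) = φ(R−ε) for t > R+3ε. Then φ ∈ H^ω([0,∞),ℝ), i.e., |φ(t) − φ(s)| ≤ ω(|t−s|) for all t,s ≥ 0. -/
import Mathlib


/-- The auxiliary function `φ` built from a modulus of continuity `ω`:
`φ(t) = ω(R+ε) − ω(t)` for `0 ≤ t ≤ R+ε`, `φ(t) = φ(2(R+ε)−t)` for
`R+ε < t ≤ R+3ε`, and `φ(t) = φ(R−ε)` for `t > R+3ε`. -/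
noncomputable def phiAux (ω : ℝ → ℝ) (R ε t : ℝ) : ℝ :=
  if t ≤ R + ε then ω (R + ε) - ω t
  else if t ≤ R + 3 * ε then ω (R + ε) - ω (2 * (R + ε) - t)
  else ω (R + ε) - ω (R - ε)

/-- The underlying 1-Lipschitz "reparametrization". -/
noncomputable def gAux (R ε t : ℝ) : ℝ :=
  if t ≤ R + ε then t else max (2 * (R + ε) - t) (R - ε)

lemma phiAux_eq_gAux (ω : ℝ → ℝ) (R ε : ℝ) (hε : 0 < ε) (t : ℝ) :
    phiAux ω R ε t = ω (R + ε) - ω (gAux R ε t) := by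
  unfold phiAux gAux
  by_cases h1 : t ≤ R + ε
  · simp [h1]
  · by_cases h2 : t ≤ R + 3 * ε
    · have : max (2 * (R + ε) - t) (R - ε) = 2 * (R + ε) - t :=
        max_eq_left (by linarith)
      simp [h1, h2, this]
    · have : max (2 * (R + ε) - t) (R - ε) = R - ε :=
        max_eq_right (by linarith)
      simp [h1, h2, this]

lemma gAux_nonneg (R ε t : ℝ) (hεR : ε ≤ R) (ht : 0 ≤ t) : 0 ≤ gAux R ε t := by
  unfold gAux
  by_cases h1 : t ≤ R + ε
  · simpa [h1]
  · simp only [h1, if_false]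
    exact le_trans (by linarith) (le_max_right _ _)

lemma gAux_lip (R ε t s : ℝ) (hε : 0 ≤ ε) : |gAux R ε t - gAux R ε s| ≤ |t - s| := by
  unfold gAux
  by_cases h1 : t ≤ R + ε <;> by_cases h2 : s ≤ R + ε <;>
    simp only [h1, h2, if_true, if_false]
  · exact le_refl _
  · -- t ≤ R+ε < s
    have h2' : R + ε < s := not_le.mp h2
    have hgs1 : 2 * (R + ε) - s ≤ max (2 * (R + ε) - s) (R - ε) := le_max_left _ _
    have hgs2 : max (2 * (R + ε) - s) (R - ε) ≤ s :=
      max_le (by linarith) (by linarith)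
    have habs : |t - s| = s - t := by
      rw [abs_sub_comm]; exact abs_of_nonneg (by linarith)
    rw [habs, abs_le]
    constructor <;> linarith
  · -- s ≤ R+ε < t
    have h1' : R + ε < t := not_le.mp h1
    have hgt1 : 2 * (R + ε) - t ≤ max (2 * (R + ε) - t) (R - ε) := le_max_left _ _
    have hgt2 : max (2 * (R + ε) - t) (R - ε) ≤ t :=
      max_le (by linarith) (by linarith)
    have habs : |t - s| = t - s := abs_of_nonneg (by linarith)
    rw [habs, abs_le]
    constructor <;> linarith
  · calc |max (2 * (R + ε) - t) (R - ε) - max (2 * (R + ε) - s) (R - ε)|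
        ≤ |(2 * (R + ε) - t) - (2 * (R + ε) - s)| := abs_max_sub_max_le_abs _ _ _
      _ = |t - s| := by rw [abs_sub_comm]; ring_nf

/-- The function `φ` belongs to `H^ω([0,∞),ℝ)`:
`|φ(t) − φ(s)| ≤ ω(|t−s|)` for all `t, s ≥ 0`. (The requirement `ε ≤ R` ensures
that `φ` only uses values of `ω` on its domain `[0,∞)`.) -/
theorem phiAux_mem_Homega (ω : ℝ → ℝ)
    (hω0 : ω 0 = 0)
    (hω_mono : ∀ a b : ℝ, 0 ≤ a → a ≤ b → ω a ≤ ω b)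
    (hω_cont : ContinuousOn ω (Set.Ici 0))
    (hω_subadd : ∀ a b : ℝ, 0 ≤ a → 0 ≤ b → ω (a + b) ≤ ω a + ω b)
    (R ε : ℝ) (hR : 0 < R) (hε : 0 < ε) (hεR : ε ≤ R) :
    ∀ t s : ℝ, 0 ≤ t → 0 ≤ s →
      |phiAux ω R ε t - phiAux ω R ε s| ≤ ω |t - s| := by
  -- key: |ω a - ω b| ≤ ω |a - b| for a, b ≥ 0
  have key : ∀ a b : ℝ, 0 ≤ a → 0 ≤ b → |ω a - ω b| ≤ ω |a - b| := by
    have aux : ∀ a b : ℝ, 0 ≤ a → a ≤ b → |ω a - ω b| ≤ ω |a - b| := by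
      intro a b ha hab
      have h1 : ω b ≤ ω a + ω (b - a) := by
        have := hω_subadd a (b - a) ha (by linarith)
        simpa using this
      have h2 : 0 ≤ ω (b - a) := by
        have := hω_mono 0 (b - a) le_rfl (by linarith)
        linarith [hω0 ▸ this]
      have h3 : ω a ≤ ω b := hω_mono a b ha hab
      have habs : |a - b| = b - a := by
        rw [abs_sub_comm]; exact abs_of_nonneg (by linarith)
      rw [habs, abs_sub_comm, abs_of_nonneg (by linarith)]
      linarith
    intro a b ha hb
    rcases le_total a b with h | h
    · exact aux a b ha h
    · rw [abs_sub_comm, abs_sub_comm a b]; exact aux b a hb h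
  intro t s ht hs
  rw [phiAux_eq_gAux ω R ε hε t, phiAux_eq_gAux ω R ε hε s]
  have h1 : |ω (R + ε) - ω (gAux R ε t) - (ω (R + ε) - ω (gAux R ε s))|
      = |ω (gAux R ε s) - ω (gAux R ε t)| := by ring_nf
  rw [h1]
  calc |ω (gAux R ε s) - ω (gAux R ε t)|
      ≤ ω |gAux R ε s - gAux R ε t| :=
        key _ _ (gAux_nonneg R ε s hεR hs) (gAux_nonneg R ε t hεR ht)
    _ ≤ ω |t - s| := by
        apply hω_mono _ _ (abs_nonneg _)
        rw [abs_sub_comm]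
        exact gAux_lip R ε t s hε.le
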